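/- Let 0 < δ ≤ 1 and let d > 0 be a real number. Let (Δ_i)_{i≥1} be a sequence of real numbers with Δ₁ ≥ 1 and Δ_{i+1} ≥ 2·Δ_i for all i ≥ 1. Then ∑_{i : Δ_i < d/(2·log₂(2/δ))} 2^{−d/Δ_i} ≤ δ/2, where the sum ranges over the (finitely many) indices i ≥ 1 with Δ_i < d/(2·log₂(2/δ)). -/

import Mathlib

/-- If `Δ₁ ≥ 1` and `Δ_{i+1} ≥ 2Δ_i` for all `i ≥ 1`, then
`∑_{i ≥ 1 : Δ_i < d/(2 log₂(2/δ))} 2^{−d/Δ_i} ≤ δ/2`. -/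
theorem stmt12 (δ : ℝ) (hδ : 0 < δ) (hδ1 : δ ≤ 1) (d : ℝ) (hd : 0 < d)
    (Δ : ℕ → ℝ) (hΔ1 : 1 ≤ Δ 1) (hΔ : ∀ i, 1 ≤ i → 2 * Δ i ≤ Δ (i + 1)) :
    ∑' i : {i : ℕ // 1 ≤ i ∧ Δ i < d / (2 * Real.logb 2 (2 / δ))},
        (2 : ℝ) ^ (-(d / Δ (i : ℕ))) ≤ δ / 2 := by
  classical
  set L := Real.logb 2 (2 / δ) with hLdef
  set T := d / (2 * L) with hTdef
  have h2δ : (2:ℝ) ≤ 2 / δ := by rw [le_div_iff₀ hδ]; nlinarith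
  have hL : 1 ≤ L := by
    have := (Real.logb_le_logb (b := 2) one_lt_two two_pos (by linarith : (0:ℝ) < 2/δ)).mpr h2δ
    simpa [Real.logb_self_eq_one] using this
  have h2L : (2:ℝ) ^ (-L) = δ / 2 := by
    rw [Real.rpow_neg (by norm_num), hLdef, Real.rpow_logb two_pos (by norm_num) (by positivity)]
    field_simp
  -- growth of Δ
  have hpow : ∀ k i, 1 ≤ i → (2:ℝ) ^ k * Δ i ≤ Δ (i + k) := by
    intro k
    induction k with
    | zero => intro i hi; simp
    | succ k ih =>
      intro i hi
      have h1 := ih i hi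
      have h2 := hΔ (i + k) (by omega)
      calc (2:ℝ) ^ (k+1) * Δ i = 2 * ((2:ℝ)^k * Δ i) := by ring
        _ ≤ 2 * Δ (i + k) := by linarith
        _ ≤ Δ (i + k + 1) := h2
  have hΔlb : ∀ i, 1 ≤ i → (2:ℝ) ^ (i - 1) ≤ Δ i := by
    intro i hi
    have := hpow (i - 1) 1 le_rfl
    have heq : 1 + (i - 1) = i := by omega
    rw [heq] at this
    nlinarith [pow_pos (two_pos (α := ℝ)) (i-1)]
  have hΔpos : ∀ i, 1 ≤ i → 0 < Δ i := fun i hi =>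
    lt_of_lt_of_le (pow_pos two_pos _) (hΔlb i hi)
  -- empty case
  by_cases hne : ∃ i, 1 ≤ i ∧ Δ i < T
  swap
  · have : IsEmpty {i : ℕ // 1 ≤ i ∧ Δ i < T} := ⟨fun x => hne ⟨x.1, x.2⟩⟩
    rw [tsum_empty]; positivity
  -- bound on indices
  obtain ⟨N, hN⟩ := pow_unbounded_of_one_lt T (one_lt_two (α := ℝ))
  have hidx : ∀ i, 1 ≤ i → Δ i < T → i ≤ N := by
    intro i hi hiT
    by_contra h
    push_neg at h
    have : (2:ℝ) ^ N ≤ 2 ^ (i - 1) := pow_le_pow_right₀ one_le_two (by omega)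
    linarith [hΔlb i hi]
  -- finiteness
  have hfin : Finite {i : ℕ // 1 ≤ i ∧ Δ i < T} := by
    apply Set.Finite.to_subtype
    apply Set.Finite.subset (Set.finite_Icc 0 N)
    rintro i ⟨h1, h2⟩
    exact ⟨Nat.zero_le _, hidx i h1 h2⟩
  -- max element
  set F : Finset ℕ := (Finset.range (N+1)).filter (fun i => 1 ≤ i ∧ Δ i < T) with hF
  obtain ⟨i₀, hi₀⟩ := hne
  have hFne : F.Nonempty := ⟨i₀, by
    simp only [hF, Finset.mem_filter, Finset.mem_range]
    exact ⟨Nat.lt_succ_of_le (hidx i₀ hi₀.1 hi₀.2), hi₀⟩⟩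
  set m := F.max' hFne with hm
  have hmF : m ∈ F := F.max'_mem hFne
  have hmP : 1 ≤ m ∧ Δ m < T := by
    have := hmF; simp only [hF, Finset.mem_filter] at this; exact this.2
  have hle_m : ∀ i, 1 ≤ i → Δ i < T → i ≤ m := by
    intro i h1 h2
    apply F.le_max'
    simp only [hF, Finset.mem_filter, Finset.mem_range]
    exact ⟨Nat.lt_succ_of_le (hidx i h1 h2), h1, h2⟩
  -- key term bound
  have hterm : ∀ i : {i : ℕ // 1 ≤ i ∧ Δ i < T},
      (2:ℝ) ^ (-(d / Δ (i:ℕ))) ≤ (δ/4) * (1/2) ^ (m - (i:ℕ)) := by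
    rintro ⟨i, hi1, hiT⟩
    set n := m - i with hn
    have him : i ≤ m := hle_m i hi1 hiT
    have heq : i + n = m := by omega
    have hΔi : 0 < Δ i := hΔpos i hi1
    have hΔm : 0 < Δ m := hΔpos m hmP.1
    have hgr : (2:ℝ)^n * Δ i ≤ Δ m := heq ▸ hpow n i hi1
    have h2L' : 2 * L * Δ m < d := by
      have := hmP.2
      rw [hTdef, lt_div_iff₀ (by positivity)] at this
      linarith
    -- d / Δ i ≥ 2^n * (d / Δ m) ≥ 2^n * 2L ≥ (n+2) * L ≥ L + (n+1)
    have hn2 : (n:ℝ) + 2 ≤ (2:ℝ)^(n+1) := by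
      have := (n+1).lt_two_pow_self
      have : (n + 2 : ℕ) ≤ 2 ^ (n+1) := by omega
      calc ((n:ℝ)+2) = ((n+2 : ℕ) : ℝ) := by push_cast; ring
        _ ≤ ((2^(n+1) : ℕ) : ℝ) := by exact_mod_cast this
        _ = (2:ℝ)^(n+1) := by push_cast; ring
    have hkey : L + ((n:ℝ) + 1) ≤ d / Δ i := by
      have h1 : (2:ℝ)^(n+1) * L * Δ i ≤ d := by
        calc (2:ℝ)^(n+1) * L * Δ i = 2 * L * ((2:ℝ)^n * Δ i) := by ring
          _ ≤ 2 * L * Δ m := by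
              have hLpos : (0:ℝ) < L := by linarith
              nlinarith
          _ ≤ d := h2L'.le
      rw [le_div_iff₀ hΔi]
      have ha : L + ((n:ℝ)+1) ≤ ((n:ℝ)+2) * L := by nlinarith [mul_nonneg (by positivity : (0:ℝ) ≤ (n:ℝ)+1) (by linarith : (0:ℝ) ≤ L - 1)]
      have hLpos : (0:ℝ) < L := by linarith
      calc (L + ((n:ℝ)+1)) * Δ i ≤ (((n:ℝ)+2) * L) * Δ i :=
            mul_le_mul_of_nonneg_right ha hΔi.le
        _ ≤ (2:ℝ)^(n+1) * L * Δ i := by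
            nlinarith [mul_le_mul_of_nonneg_right hn2 (mul_nonneg hLpos.le hΔi.le)]
        _ ≤ d := h1
    calc (2:ℝ) ^ (-(d / Δ i)) ≤ (2:ℝ) ^ (-(L + ((n:ℝ)+1))) := by
          apply Real.rpow_le_rpow_of_exponent_le one_le_two
          linarith
      _ = (2:ℝ)^(-L) * (2:ℝ)^(-((n:ℝ)+1)) := by
          rw [← Real.rpow_add two_pos]; ring_nf
      _ = (δ/4) * (1/2)^n := by
          rw [h2L]
          have : (2:ℝ)^(-((n:ℝ)+1)) = (1/2)^(n+1) := by
            rw [show -((n:ℝ)+1) = -((n+1 : ℕ) : ℝ) by push_cast; ring,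
              Real.rpow_neg (by norm_num), Real.rpow_natCast]
            rw [one_div, inv_pow]
          rw [this, pow_succ]
          ring
  -- dominate by geometric series
  have hsum : Summable (fun n : ℕ => (δ/4) * (1/2:ℝ)^n) :=
    (summable_geometric_of_lt_one (by norm_num) (by norm_num)).mul_left _
  have hinj : Function.Injective
      (fun i : {i : ℕ // 1 ≤ i ∧ Δ i < T} => m - (i:ℕ)) := by
    rintro ⟨i, hi⟩ ⟨j, hj⟩ h
    have hi' : i ≤ m := hle_m i hi.1 hi.2
    have hj' : j ≤ m := hle_m j hj.1 hj.2
    have h' : m - i = m - j := h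
    have : i = j := by omega
    exact Subtype.ext this
  have := Summable.tsum_le_tsum_of_inj (f := fun i : {i : ℕ // 1 ≤ i ∧ Δ i < T} =>
      (2:ℝ) ^ (-(d / Δ (i:ℕ)))) (g := fun n : ℕ => (δ/4) * (1/2:ℝ)^n)
      _ hinj (fun c _ => by positivity) hterm Summable.of_finite hsum
  refine this.trans ?_
  rw [tsum_mul_left, tsum_geometric_of_lt_one (by norm_num) (by norm_num)]
  norm_num
  linarith
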